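/- Let λ ∈ ℝ with λ ≥ r̄ := max_{x∈S} r(x), and let μ be a nonzero λ-eigenmeasure of r̃+J̃. Assume the set Σ = {x ∈ S : r(x) = r̄} has Lebesgue measure zero and that the function x ↦ 1/(r̄ − r(x)) is not Lebesgue-integrable on S. Then λ > r̄. -/

import Mathlib

open MeasureTheory Filter Topology

/-- A finite positive Borel measure μ on S is a λ-eigenmeasure of the operator r̃+J̃ if for
every Borel set A ⊆ S one has ∫_A r dμ + ∫_A (∫_S K(y,x) μ(dy)) dx = λ μ(A). -/
def IsEigenmeasure {d : ℕ} (S : Set (EuclideanSpace ℝ (Fin d)))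
    (r : EuclideanSpace ℝ (Fin d) → ℝ)
    (K : EuclideanSpace ℝ (Fin d) → EuclideanSpace ℝ (Fin d) → ℝ)
    (lam : ℝ) (μ : MeasureTheory.Measure (EuclideanSpace ℝ (Fin d))) : Prop :=
  ∀ A : Set (EuclideanSpace ℝ (Fin d)), MeasurableSet A → A ⊆ S →
    (∫ x in A, r x ∂μ) + (∫ x in A, (∫ y in S, K y x ∂μ)) = lam * (μ A).toReal

/-- If λ ≥ r̄, the set Σ = {x ∈ S : r(x) = r̄} is Lebesgue-null and 1/(r̄ − r) is not
Lebesgue-integrable on S, then every nonzero λ-eigenmeasure of r̃+J̃ satisfies λ > r̄. -/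
theorem stmt8 {d : ℕ}
    (Ω S : Set (EuclideanSpace ℝ (Fin d)))
    (hΩne : Ω.Nonempty) (hΩopen : IsOpen Ω) (hΩbdd : Bornology.IsBounded Ω)
    (hΩconn : IsConnected Ω) (hSdef : S = closure Ω)
    (hScomp : IsCompact S) (hSvol : 0 < volume S)
    (r : EuclideanSpace ℝ (Fin d) → ℝ) (hr : ContinuousOn r S)
    (hrpos : ∀ x ∈ S, 0 < r x)
    (K : EuclideanSpace ℝ (Fin d) → EuclideanSpace ℝ (Fin d) → ℝ)
    (hK : ContinuousOn (fun q : EuclideanSpace ℝ (Fin d) × EuclideanSpace ℝ (Fin d) =>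
      K q.1 q.2) (S ×ˢ S))
    (hKnn : ∀ x ∈ S, ∀ y ∈ S, 0 ≤ K x y)
    (ε₀ c₀ : ℝ) (hε₀ : 0 < ε₀) (hc₀ : 0 < c₀)
    (hKlb : ∀ x ∈ S, ∀ y ∈ S, dist y x < ε₀ → c₀ < K x y)
    (μ : Measure (EuclideanSpace ℝ (Fin d))) [IsFiniteMeasure μ]
    (hμne : μ ≠ 0) (hμS : μ Sᶜ = 0)
    (lam : ℝ) (hμ : IsEigenmeasure S r K lam μ)
    (rbar : ℝ) (hrbar : IsGreatest (r '' S) rbar) (hlam : rbar ≤ lam)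
    (hSig : volume {x ∈ S | r x = rbar} = 0)
    (hnotint : ¬ IntegrableOn (fun x => 1 / (rbar - r x)) S volume) :
    rbar < lam := by
  classical
  by_contra hlt
  have hlameq : lam = rbar := le_antisymm (not_lt.mp hlt) hlam
  have hSmeas : MeasurableSet S := hScomp.measurableSet
  have hΩS : Ω ⊆ S := hSdef ▸ subset_closure
  have hSne : S.Nonempty := hΩne.mono hΩS
  -- μ is concentrated on S
  have hμinter : ∀ A : Set (EuclideanSpace ℝ (Fin d)), μ (A ∩ S) = μ A := by
    intro A
    have h0 : μ (A \ S) = 0 := measure_mono_null (Set.diff_subset_compl A S) hμS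
    have := measure_inter_add_diff A hSmeas (μ := μ)
    rw [h0, add_zero] at this
    exact this
  have hμSpos : 0 < μ S := by
    have h1 : μ Set.univ ≠ 0 := fun h => hμne (Measure.measure_univ_eq_zero.mp h)
    have h2 : μ (Set.univ ∩ S) = μ Set.univ := hμinter Set.univ
    rw [Set.univ_inter] at h2
    exact (pos_iff_ne_zero).2 (fun h => h1 (by rw [← h2, h]))
  have hμSfin : μ S ≠ ⊤ := measure_ne_top μ S
  have hvolSfin : volume S ≠ ⊤ := hScomp.measure_lt_top.ne
  -- rbar and lam are positive
  obtain ⟨x₀, hx₀S, hx₀⟩ := hrbar.1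
  have hrbarpos : 0 < rbar := hx₀ ▸ hrpos x₀ hx₀S
  have hlampos : 0 < lam := lt_of_lt_of_le hrbarpos hlam
  have hrle : ∀ x ∈ S, r x ≤ rbar := fun x hx => hrbar.2 ⟨x, hx, rfl⟩
  -- bounds for r and K
  obtain ⟨Cr, hCr⟩ := hScomp.exists_bound_of_continuousOn hr
  obtain ⟨CK, hCK⟩ := (hScomp.prod hScomp).exists_bound_of_continuousOn hK
  -- integrability helper
  have hIntOn : ∀ (f : EuclideanSpace ℝ (Fin d) → ℝ) (ν : Measure (EuclideanSpace ℝ (Fin d))) (C : ℝ), ν S ≠ ⊤ →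
      AEStronglyMeasurable f (ν.restrict S) → (∀ x ∈ S, ‖f x‖ ≤ C) → IntegrableOn f S ν := by
    intro f ν C hν hmf hbf
    have hres : (ν.restrict S) S ≠ ⊤ := by
      rw [Measure.restrict_apply hSmeas, Set.inter_self]; exact hν
    have h := Measure.integrableOn_of_bounded (μ := ν.restrict S) (s := S) (f := f) hres hmf
      (by
        filter_upwards [ae_restrict_mem hSmeas] with x hx
        exact hbf x hx)
    unfold IntegrableOn at h ⊢
    rwa [Measure.restrict_restrict hSmeas, Set.inter_self] at h
  -- integrability of r, rbar - r on S wrt μ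
  have hrASM : AEStronglyMeasurable r (μ.restrict S) := hr.aestronglyMeasurable hSmeas
  have hr_intS : IntegrableOn r S μ := hIntOn r μ Cr hμSfin hrASM hCr
  have hrr_intS : IntegrableOn (fun x => rbar - r x) S μ := by
    exact (integrableOn_const hμSfin).sub hr_intS
  -- K(·,z) integrable on S for z ∈ S
  have hKz_cont : ∀ z ∈ S, ContinuousOn (fun y => K y z) S := by
    intro z hz
    exact hK.comp ((continuous_id.prodMk continuous_const).continuousOn)
      (fun y hy => Set.mk_mem_prod hy hz)
  have hKz_int : ∀ z ∈ S, IntegrableOn (fun y => K y z) S μ := by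
    intro z hz
    exact hIntOn _ μ CK hμSfin ((hKz_cont z hz).aestronglyMeasurable hSmeas)
      (fun y hy => hCK (y, z) (Set.mk_mem_prod hy hz))
  -- the function g
  set g : EuclideanSpace ℝ (Fin d) → ℝ := fun z => ∫ y in S, K y z ∂μ with hgdef
  have hgnn : ∀ z ∈ S, 0 ≤ g z := fun z hz =>
    setIntegral_nonneg hSmeas (fun y hy => hKnn y hy z hz)
  have hgb : ∀ z ∈ S, ‖g z‖ ≤ CK * (μ S).toReal := by
    intro z hz
    rw [Real.norm_eq_abs, abs_of_nonneg (hgnn z hz)]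
    have h1 : g z ≤ ∫ y in S, CK ∂μ := by
      refine setIntegral_mono_on (hKz_int z hz)
        (integrableOn_const hμSfin) hSmeas (fun y hy => ?_)
      exact le_trans (le_abs_self _) (hCK (y, z) (Set.mk_mem_prod hy hz))
    rw [setIntegral_const, smul_eq_mul, mul_comm] at h1
    exact h1
  -- measurability of g wrt volume on S
  have hgASM : AEStronglyMeasurable g (volume.restrict S) := by
    have hc : ContinuousOn (fun q : EuclideanSpace ℝ (Fin d) × EuclideanSpace ℝ (Fin d) => K q.2 q.1) (S ×ˢ S) :=
      hK.comp continuous_swap.continuousOn (fun q hq => Set.mk_mem_prod hq.2 hq.1)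
    have h1 : AEStronglyMeasurable (fun q : EuclideanSpace ℝ (Fin d) × EuclideanSpace ℝ (Fin d) => K q.2 q.1)
        ((volume.prod μ).restrict (S ×ˢ S)) :=
      hc.aestronglyMeasurable (hSmeas.prod hSmeas)
    rw [← Measure.prod_restrict] at h1
    exact h1.integral_prod_right'
  have hg_intS : IntegrableOn g S volume :=
    hIntOn g volume (CK * (μ S).toReal) hvolSfin hgASM hgb
  -- the eigen-equation with lam = rbar
  have heq : ∀ A : Set (EuclideanSpace ℝ (Fin d)), MeasurableSet A → A ⊆ S →
      ∫ x in A, (rbar - r x) ∂μ = ∫ x in A, g x := by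
    intro A hA hAS
    have h1 := hμ A hA hAS
    rw [hlameq] at h1
    have h2 : ∫ x in A, (rbar - r x) ∂μ = (∫ x in A, rbar ∂μ) - ∫ x in A, r x ∂μ :=
      integral_sub (integrableOn_const ((measure_mono hAS).trans_lt hμSfin.lt_top).ne)
        (hr_intS.mono_set hAS)
    rw [setIntegral_const, smul_eq_mul, mul_comm, measureReal_def] at h2
    rw [h2]
    linarith
  -- μ dominates g volume-integrals
  have hmono : ∀ A : Set (EuclideanSpace ℝ (Fin d)), MeasurableSet A → A ⊆ S →
      (∫ x in A, g x) ≤ lam * (μ A).toReal := by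
    intro A hA hAS
    have h1 := hμ A hA hAS
    have h2 : 0 ≤ ∫ x in A, r x ∂μ :=
      setIntegral_nonneg hA (fun x hx => (hrpos x (hAS hx)).le)
    linarith
  -- positive volume of relative balls
  have hvolball : ∀ y ∈ S, ∀ ρ : ℝ, 0 < ρ → 0 < volume (Metric.ball y ρ ∩ S) := by
    intro y hy ρ hρ
    have hyΩ : y ∈ closure Ω := hSdef ▸ hy
    have hne : (Metric.ball y ρ ∩ Ω).Nonempty := by
      rcases _root_.mem_closure_iff.mp hyΩ (Metric.ball y ρ) Metric.isOpen_ball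
        (Metric.mem_ball_self hρ) with ⟨z, hz1, hz2⟩
      exact ⟨z, hz1, hz2⟩
    have hpos : 0 < volume (Metric.ball y ρ ∩ Ω) :=
      (Metric.isOpen_ball.inter hΩopen).measure_pos volume hne
    exact lt_of_lt_of_le hpos (measure_mono (Set.inter_subset_inter_right _ hΩS))
  -- lower bound on g from mass near the diagonal
  have hglb : ∀ z ∈ S, ∀ (x : EuclideanSpace ℝ (Fin d)) (δ : ℝ), 0 < δ →
      (∀ y' ∈ Metric.ball x δ ∩ S, dist z y' < ε₀) →
      c₀ * (μ (Metric.ball x δ)).toReal ≤ g z := by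
    intro z hz x δ hδ hdist
    have hBmeas : MeasurableSet (Metric.ball x δ ∩ S) := measurableSet_ball.inter hSmeas
    have hBS : Metric.ball x δ ∩ S ⊆ S := Set.inter_subset_right
    have h1 : ∫ y in Metric.ball x δ ∩ S, K y z ∂μ ≤ ∫ y in S, K y z ∂μ := by
      refine setIntegral_mono_set (hKz_int z hz) ?_ hBS.eventuallyLE
      filter_upwards [ae_restrict_mem hSmeas] with y hy
      exact hKnn y hy z hz
    have h2 : c₀ * (μ (Metric.ball x δ ∩ S)).toReal ≤ ∫ y in Metric.ball x δ ∩ S, K y z ∂μ := by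
      refine setIntegral_ge_of_const_le_real hBmeas (measure_ne_top μ _) (fun y hy => ?_)
        ((hKz_int z hz).mono_set hBS)
      exact (hKlb y hy.2 z hz (hdist y hy)).le
    rw [hμinter] at h2
    exact h2.trans h1
  -- the set of points of full local mass
  set T : Set (EuclideanSpace ℝ (Fin d)) := {x | x ∈ S ∧ ∀ ρ : ℝ, 0 < ρ → 0 < μ (Metric.ball x ρ)} with hTdef
  have hTS : T ⊆ S := fun x hx => hx.1
  -- T is nonempty
  have hTne : T.Nonempty := by
    by_contra hTe
    push_neg at hTe
    have h : ∀ x ∈ S, ∃ ρ, 0 < ρ ∧ μ (Metric.ball x ρ) = 0 := by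
      intro x hx
      have := Set.eq_empty_iff_forall_notMem.mp hTe x
      rw [hTdef] at this
      simp only [Set.mem_setOf_eq, not_and, not_forall] at this
      obtain ⟨ρ, hρ, hμρ⟩ := this hx
      exact ⟨ρ, hρ, le_antisymm (not_lt.mp hμρ) zero_le⟩
    choose! ρ hρpos hρ0 using h
    obtain ⟨t, htS, hcov⟩ := hScomp.elim_nhds_subcover (fun x => Metric.ball x (ρ x))
      (fun x hx => Metric.ball_mem_nhds x (hρpos x hx))
    have hle : μ S ≤ ∑ x ∈ t, μ (Metric.ball x (ρ x)) :=
      (measure_mono hcov).trans (measure_biUnion_finset_le t _)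
    have hzero : ∑ x ∈ t, μ (Metric.ball x (ρ x)) = 0 :=
      Finset.sum_eq_zero (fun x hx => hρ0 x (htS x hx))
    rw [hzero] at hle
    exact absurd (le_antisymm hle zero_le) hμSpos.ne'
  -- spreading property
  have hspread : ∀ x ∈ T, ∀ y ∈ S, dist y x < ε₀ → y ∈ T := by
    intro x hx y hy hdyx
    refine ⟨hy, fun ρ hρ => ?_⟩
    set e := ε₀ - dist y x with hedef
    have hepos : 0 < e := by simp [hedef]; linarith
    set ρ' := min ρ (e / 3) with hρ'def
    have hρ'pos : 0 < ρ' := lt_min hρ (by linarith)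
    set A := Metric.ball y ρ' ∩ S with hAdef
    have hAmeas : MeasurableSet A := measurableSet_ball.inter hSmeas
    have hAS : A ⊆ S := Set.inter_subset_right
    have hAfin : volume A ≠ ⊤ := ((measure_mono hAS).trans_lt hScomp.measure_lt_top).ne
    have hgz : ∀ z ∈ A, c₀ * (μ (Metric.ball x (e / 3))).toReal ≤ g z := by
      intro z hz
      refine hglb z hz.2 x (e / 3) (by linarith) ?_
      intro y' hy'
      have h1 : dist z y < ρ' := Metric.mem_ball.mp hz.1
      have h2 : dist y' x < e / 3 := Metric.mem_ball.mp hy'.1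
      have h3 : ρ' ≤ e / 3 := min_le_right _ _
      calc dist z y' ≤ dist z y + dist y y' := dist_triangle _ _ _
        _ ≤ dist z y + (dist y x + dist x y') := by
            have := dist_triangle y x y'
            linarith
        _ < e / 3 + ((ε₀ - e) + e / 3) := by
            rw [dist_comm x y']
            have : dist y x = ε₀ - e := by rw [hedef]; ring
            linarith
        _ ≤ ε₀ := by linarith
    have hμδ : 0 < μ (Metric.ball x (e / 3)) := hx.2 (e / 3) (by linarith)
    have hvolA : 0 < volume A := hvolball y hy ρ' hρ'pos
    have hc : 0 < c₀ * (μ (Metric.ball x (e / 3))).toReal * (volume A).toReal := by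
      have t1 : 0 < (μ (Metric.ball x (e / 3))).toReal :=
        ENNReal.toReal_pos hμδ.ne' (measure_ne_top μ _)
      have t2 : 0 < (volume A).toReal := ENNReal.toReal_pos hvolA.ne' hAfin
      positivity
    have h1 : c₀ * (μ (Metric.ball x (e / 3))).toReal * (volume A).toReal ≤ ∫ z in A, g z := by
      have := setIntegral_ge_of_const_le_real hAmeas hAfin hgz (hg_intS.mono_set hAS)
      exact this
    have h2 := hmono A hAmeas hAS
    have h3 : 0 < lam * (μ A).toReal := lt_of_lt_of_le hc (h1.trans h2)
    have hμA : 0 < μ A := by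
      by_contra hA0
      have : μ A = 0 := le_antisymm (not_lt.mp hA0) zero_le
      rw [this] at h3
      simp at h3
    refine lt_of_lt_of_le hμA (measure_mono ?_)
    exact Set.inter_subset_left.trans (Metric.ball_subset_ball (min_le_left _ _))
  -- T = S by connectedness
  have hTall : ∀ z ∈ S, z ∈ T := by
    by_contra hc
    push_neg at hc
    obtain ⟨z₀, hz₀S, hz₀T⟩ := hc
    have hnotT : ∀ x, x ∈ S → x ∉ T → ∃ ρ, 0 < ρ ∧ μ (Metric.ball x ρ) = 0 := by
      intro x hx hxT
      rw [hTdef] at hxT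
      simp only [Set.mem_setOf_eq, not_and, not_forall] at hxT
      obtain ⟨ρ, hρ, hμρ⟩ := hxT hx
      exact ⟨ρ, hρ, le_antisymm (not_lt.mp hμρ) zero_le⟩
    choose! ρ hρpos hρ0 using fun x (h : x ∈ S ∧ x ∉ T) => hnotT x h.1 h.2
    set U : Set (EuclideanSpace ℝ (Fin d)) := ⋃ x ∈ T, Metric.ball x ε₀ with hUdef
    set V : Set (EuclideanSpace ℝ (Fin d)) := ⋃ x ∈ {x | x ∈ S ∧ x ∉ T}, Metric.ball x (ρ x / 2) with hVdef
    have hUopen : IsOpen U := isOpen_biUnion (fun _ _ => Metric.isOpen_ball)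
    have hVopen : IsOpen V := isOpen_biUnion (fun _ _ => Metric.isOpen_ball)
    have hcov : S ⊆ U ∪ V := by
      intro x hx
      by_cases hxT : x ∈ T
      · exact Or.inl (Set.mem_biUnion hxT (Metric.mem_ball_self hε₀))
      · refine Or.inr (Set.mem_biUnion ⟨hx, hxT⟩ (Metric.mem_ball_self ?_))
        have := hρpos x ⟨hx, hxT⟩
        linarith
    have hpre : IsPreconnected S := by
      rw [hSdef]
      exact hΩconn.closure.isPreconnected
    obtain ⟨xT, hxT⟩ := hTne
    have hUne : (S ∩ U).Nonempty :=
      ⟨xT, hxT.1, Set.mem_biUnion hxT (Metric.mem_ball_self hε₀)⟩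
    have hVne : (S ∩ V).Nonempty := by
      refine ⟨z₀, hz₀S, Set.mem_biUnion ⟨hz₀S, hz₀T⟩ (Metric.mem_ball_self ?_)⟩
      have := hρpos z₀ ⟨hz₀S, hz₀T⟩
      linarith
    obtain ⟨w, hwS, hwU, hwV⟩ := hpre U V hUopen hVopen hcov hUne hVne
    obtain ⟨x1, hx1T, hwx1⟩ := Set.mem_iUnion₂.mp hwU
    obtain ⟨x2, hx2, hwx2⟩ := Set.mem_iUnion₂.mp hwV
    have hwT : w ∈ T := hspread x1 hx1T w hwS (Metric.mem_ball.mp hwx1)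
    have hρ2pos : 0 < ρ x2 / 2 := by have := hρpos x2 hx2; linarith
    have hsub : Metric.ball w (ρ x2 / 2) ⊆ Metric.ball x2 (ρ x2) := by
      intro u hu
      have h1 : dist u w < ρ x2 / 2 := Metric.mem_ball.mp hu
      have h2 : dist w x2 < ρ x2 / 2 := Metric.mem_ball.mp hwx2
      have := dist_triangle u w x2
      rw [Metric.mem_ball]
      linarith
    have h0 : μ (Metric.ball w (ρ x2 / 2)) = 0 :=
      le_antisymm ((measure_mono hsub).trans_eq (hρ0 x2 hx2)) zero_le
    exact absurd h0 (hwT.2 _ hρ2pos).ne'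
  -- uniform positive lower bound on g
  obtain ⟨t, htS, hcov⟩ := hScomp.elim_nhds_subcover (fun x => Metric.ball x (ε₀ / 2))
    (fun x _ => Metric.ball_mem_nhds x (by linarith))
  have htne : t.Nonempty := by
    rcases hSne with ⟨s₀, hs₀⟩
    rcases Set.mem_iUnion₂.mp (hcov hs₀) with ⟨x, hx, _⟩
    exact ⟨x, hx⟩
  set m : ℝ := c₀ * t.inf' htne (fun x => (μ (Metric.ball x (ε₀ / 2))).toReal) with hmdef
  have hmpos : 0 < m := by
    refine mul_pos hc₀ ?_
    rw [Finset.lt_inf'_iff]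
    intro x hx
    exact ENNReal.toReal_pos ((hTall x (htS x hx)).2 (ε₀ / 2) (by linarith)).ne'
      (measure_ne_top μ _)
  have hmg : ∀ z ∈ S, m ≤ g z := by
    intro z hz
    rcases Set.mem_iUnion₂.mp (hcov hz) with ⟨x, hx, hzx⟩
    refine le_trans ?_ (hglb z hz x (ε₀ / 2) (by linarith) ?_)
    · exact mul_le_mul_of_nonneg_left (Finset.inf'_le _ hx) hc₀.le
    · intro y' hy'
      have h1 : dist z x < ε₀ / 2 := Metric.mem_ball.mp hzx
      have h2 : dist y' x < ε₀ / 2 := Metric.mem_ball.mp hy'.1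
      calc dist z y' ≤ dist z x + dist x y' := dist_triangle _ _ _
        _ < ε₀ / 2 + ε₀ / 2 := by rw [dist_comm x y']; linarith
        _ = ε₀ := by ring
  -- the density functions
  set f1 : EuclideanSpace ℝ (Fin d) → ENNReal := fun x => ENNReal.ofReal (rbar - r x) with hf1def
  set f2 : EuclideanSpace ℝ (Fin d) → ENNReal := fun x => ENNReal.ofReal (1 / (rbar - r x)) with hf2def
  set G : EuclideanSpace ℝ (Fin d) → ENNReal := fun x => ENNReal.ofReal (g x) with hGdef
  have hrAEM : ∀ ν : Measure (EuclideanSpace ℝ (Fin d)), AEMeasurable r (ν.restrict S) := fun ν =>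
    (hr.aestronglyMeasurable hSmeas).aemeasurable
  have hf1AEM : ∀ ν : Measure (EuclideanSpace ℝ (Fin d)), AEMeasurable f1 (ν.restrict S) := fun ν =>
    ENNReal.measurable_ofReal.comp_aemeasurable (aemeasurable_const.sub (hrAEM ν))
  have hf2AEM : ∀ ν : Measure (EuclideanSpace ℝ (Fin d)), AEMeasurable f2 (ν.restrict S) := by
    intro ν
    have h1 : AEMeasurable (fun x => 1 / (rbar - r x)) (ν.restrict S) := by
      simp only [one_div]
      exact (aemeasurable_const.sub (hrAEM ν)).inv
    exact ENNReal.measurable_ofReal.comp_aemeasurable h1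
  have hGAEM : AEMeasurable G (volume.restrict S) :=
    ENNReal.measurable_ofReal.comp_aemeasurable hgASM.aemeasurable
  -- the two withDensity measures agree
  set ν₁ : Measure (EuclideanSpace ℝ (Fin d)) := (μ.restrict S).withDensity f1 with hν₁def
  set ν₂ : Measure (EuclideanSpace ℝ (Fin d)) := (volume.restrict S).withDensity G with hν₂def
  have hν : ν₁ = ν₂ := by
    ext A hA
    rw [hν₁def, hν₂def, withDensity_apply _ hA, withDensity_apply _ hA,
      Measure.restrict_restrict hA, Measure.restrict_restrict hA]
    have hASm : MeasurableSet (A ∩ S) := hA.inter hSmeas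
    have hASS : A ∩ S ⊆ S := Set.inter_subset_right
    have e1 : ∫⁻ x in A ∩ S, f1 x ∂μ = ENNReal.ofReal (∫ x in A ∩ S, (rbar - r x) ∂μ) := by
      refine (ofReal_integral_eq_lintegral_ofReal (hrr_intS.mono_set hASS) ?_).symm
      filter_upwards [ae_restrict_mem hASm] with x hx
      exact sub_nonneg.2 (hrle x hx.2)
    have e2 : ∫⁻ x in A ∩ S, G x ∂volume = ENNReal.ofReal (∫ x in A ∩ S, g x) := by
      refine (ofReal_integral_eq_lintegral_ofReal (hg_intS.mono_set hASS) ?_).symm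
      filter_upwards [ae_restrict_mem hASm] with x hx
      exact hgnn x hx.2
    rw [e1, e2, heq (A ∩ S) hASm hASS]
  -- the non-integrability gives an infinite lintegral
  have hf2ASM : AEStronglyMeasurable (fun x => 1 / (rbar - r x)) (volume.restrict S) := by
    have h1 : AEMeasurable (fun x => 1 / (rbar - r x)) (volume.restrict S) := by
      simp only [one_div]
      exact (aemeasurable_const.sub (hrAEM volume)).inv
    exact h1.aestronglyMeasurable
  have hnfin : ∫⁻ x in S, (‖1 / (rbar - r x)‖₊ : ENNReal) ∂volume = ⊤ := by
    by_contra hne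
    exact hnotint ⟨hf2ASM, lt_top_iff_ne_top.mpr hne⟩
  have hf2top : ∫⁻ x in S, f2 x ∂volume = ⊤ := by
    rw [← hnfin]
    refine lintegral_congr_ae ?_
    filter_upwards [ae_restrict_mem hSmeas] with x hx
    rw [hf2def]
    exact (Real.enorm_eq_ofReal (one_div_nonneg.2 (sub_nonneg.2 (hrle x hx)))).symm
  -- the key chain of (in)equalities
  have hμle : ∫⁻ x in S, (f1 * f2) x ∂μ ≤ μ S := by
    have hpt : ∀ x : EuclideanSpace ℝ (Fin d), (f1 * f2) x ≤ 1 := by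
      intro x
      simp only [Pi.mul_apply, hf1def, hf2def]
      by_cases h : 0 < rbar - r x
      · rw [← ENNReal.ofReal_mul h.le, mul_one_div_cancel h.ne']
        simp
      · rw [ENNReal.ofReal_eq_zero.2 (not_lt.mp h), zero_mul]
        exact zero_le
    calc ∫⁻ x in S, (f1 * f2) x ∂μ ≤ ∫⁻ _ in S, 1 ∂μ := lintegral_mono (fun x => hpt x)
      _ = μ S := by rw [setLIntegral_one]
  have l1 : ∫⁻ x, f2 x ∂ν₁ = ∫⁻ x in S, (f1 * f2) x ∂μ := by
    rw [hν₁def]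
    exact lintegral_withDensity_eq_lintegral_mul₀ (hf1AEM μ) (hf2AEM μ)
  have l2 : ∫⁻ x, f2 x ∂ν₂ = ∫⁻ x in S, (G * f2) x ∂volume := by
    rw [hν₂def]
    exact lintegral_withDensity_eq_lintegral_mul₀ hGAEM (hf2AEM volume)
  have hchain : ∫⁻ x in S, (G * f2) x ∂volume ≤ μ S := by
    rw [← l2, ← hν, l1]
    exact hμle
  have hlower : ENNReal.ofReal m * ∫⁻ x in S, f2 x ∂volume ≤ ∫⁻ x in S, (G * f2) x ∂volume := by
    rw [← lintegral_const_mul' _ _ ENNReal.ofReal_ne_top]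
    refine lintegral_mono_ae ?_
    filter_upwards [ae_restrict_mem hSmeas] with x hx
    simp only [Pi.mul_apply]
    exact mul_le_mul_left (ENNReal.ofReal_le_ofReal (hmg x hx)) (f2 x)
  have htop : (⊤ : ENNReal) ≤ μ S := by
    calc (⊤ : ENNReal) = ENNReal.ofReal m * ∫⁻ x in S, f2 x ∂volume := by
          rw [hf2top, ENNReal.mul_top (ENNReal.ofReal_pos.2 hmpos).ne']
      _ ≤ ∫⁻ x in S, (G * f2) x ∂volume := hlower
      _ ≤ μ S := hchain
  exact absurd (lt_of_le_of_lt htop (measure_lt_top μ S)) (lt_irrefl _)
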